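/- Define for D ≥ 2 and S > 0 the function γ(S) = 1 + (D/(4S)) · log(1 − (D²/((D−1)(D+2))) · ((1 − √(1 − g^D))/(1 + √(1 − g^D))) · (1 − g)), where g = exp(−2S/D). Then γ(S) < 1 for all S > 0, and γ is strictly increasing in S. -/

import Mathlib

set_option maxHeartbeats 1000000

/-- The convergence-rate function
`γ(S) = 1 + (D/(4S)) · log(1 − (D²/((D−1)(D+2))) · ((1−√(1−g^D))/(1+√(1−g^D))) · (1−g))`
with `g = exp(−2S/D)`. -/
noncomputable def gam (D : ℕ) (S : ℝ) : ℝ :=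
  1 + ((D : ℝ) / (4 * S)) * Real.log (1 -
    ((D : ℝ) ^ 2 / (((D : ℝ) - 1) * ((D : ℝ) + 2))) *
      ((1 - Real.sqrt (1 - Real.exp (-2 * S / D) ^ D)) /
        (1 + Real.sqrt (1 - Real.exp (-2 * S / D) ^ D))) *
      (1 - Real.exp (-2 * S / D)))

lemma gam_deriv_pos (D : ℕ) (hD : 2 ≤ D) {S : ℝ} (hS : 0 < S) :
    ∃ d, HasDerivAt (gam D) d S ∧ 0 < d := by
  have hD2 : (2 : ℝ) ≤ (D : ℝ) := by exact_mod_cast hD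
  have hD0 : (0 : ℝ) < (D : ℝ) := by linarith
  have hDne : (D : ℝ) ≠ 0 := ne_of_gt hD0
  set g : ℝ := Real.exp (-2 * S / D) with hgdef
  have hg0 : 0 < g := Real.exp_pos _
  have hg1 : g < 1 := by
    rw [hgdef]
    apply Real.exp_lt_one_iff.mpr
    have h : -2 * S / (D:ℝ) = -(2 * S / D) := by ring
    rw [h]
    have : 0 < 2 * S / (D:ℝ) := by positivity
    linarith
  have hp0 : 0 < g ^ D := pow_pos hg0 D
  have hp1 : g ^ D < 1 := pow_lt_one₀ hg0.le hg1 (by omega)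
  have hw0 : 0 < 1 - g ^ D := by linarith
  set u : ℝ := Real.sqrt (1 - g ^ D) with hudef
  have hu0 : 0 < u := Real.sqrt_pos.2 hw0
  have hu2 : u ^ 2 = 1 - g ^ D := Real.sq_sqrt hw0.le
  have hu1 : u < 1 := by nlinarith [hu2, hu0]
  have h1u : (0:ℝ) < 1 + u := by linarith
  set c : ℝ := (D : ℝ) ^ 2 / (((D : ℝ) - 1) * ((D : ℝ) + 2)) with hcdef
  have hden : (0:ℝ) < ((D : ℝ) - 1) * ((D : ℝ) + 2) := by nlinarith
  have hc0 : 0 < c := by rw [hcdef]; exact div_pos (by positivity) hden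
  have hc1 : c ≤ 1 := by
    rw [hcdef, div_le_one hden]
    nlinarith
  set A : ℝ := c * ((1 - u) / (1 + u)) * (1 - g) with hAdef
  have hr0 : 0 < (1 - u) / (1 + u) := div_pos (by linarith) h1u
  have hr1 : (1 - u) / (1 + u) ≤ 1 := by
    rw [div_le_one h1u]; linarith
  have hA0 : 0 < A := by
    rw [hAdef]; exact mul_pos (mul_pos hc0 hr0) (by linarith)
  have hA1g : A ≤ 1 - g := by
    rw [hAdef]
    calc c * ((1 - u) / (1 + u)) * (1 - g) ≤ 1 * 1 * (1 - g) := by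
          apply mul_le_mul _ le_rfl (by linarith) (by norm_num)
          exact mul_le_mul hc1 hr1 hr0.le (by norm_num)
      _ = 1 - g := by ring
  have hA1 : A < 1 := by linarith
  set E : ℝ := 1 - A with hEdef
  have hE0 : 0 < E := by rw [hEdef]; linarith
  have hE1 : E < 1 := by rw [hEdef]; linarith
  -- derivative chain
  have h1 : HasDerivAt (fun x : ℝ => -2 * x / (D : ℝ)) (-2 / D) S := by
    have := ((hasDerivAt_id S).const_mul (-2 : ℝ)).div_const (D : ℝ)
    refine this.congr_deriv (Eq.symm ?_)
    ring
  have hg' : HasDerivAt (fun x : ℝ => Real.exp (-2 * x / D)) (-2 / D * g) S := by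
    have h := h1.exp
    rw [← hgdef] at h
    refine h.congr_deriv (Eq.symm ?_)
    ring
  have hp' : HasDerivAt (fun x : ℝ => Real.exp (-2 * x / D) ^ D) (-2 * g ^ D) S := by
    have h := hg'.pow D
    rw [← hgdef] at h
    refine h.congr_deriv (Eq.symm ?_)
    have hgg : g ^ (D - 1) * g = g ^ D := by
      rw [← pow_succ]; congr 1; omega
    rw [← hgg]
    field_simp
  have hw' : HasDerivAt (fun x : ℝ => 1 - Real.exp (-2 * x / D) ^ D) (2 * g ^ D) S := by
    have h := hp'.const_sub 1
    refine h.congr_deriv (Eq.symm ?_)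
    ring
  have huder : HasDerivAt (fun x : ℝ => Real.sqrt (1 - Real.exp (-2 * x / D) ^ D))
      (g ^ D / u) S := by
    have h := hw'.sqrt (by rw [← hgdef]; exact ne_of_gt hw0)
    rw [← hgdef, ← hudef] at h
    refine h.congr_deriv (Eq.symm ?_)
    rw [mul_comm (2:ℝ) u]
    rw [eq_div_iff (by positivity)]
    field_simp
  have hn : HasDerivAt (fun x : ℝ => 1 - Real.sqrt (1 - Real.exp (-2 * x / D) ^ D))
      (-(g ^ D / u)) S := huder.const_sub 1
  have hd : HasDerivAt (fun x : ℝ => 1 + Real.sqrt (1 - Real.exp (-2 * x / D) ^ D))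
      (g ^ D / u) S := huder.const_add 1
  have hdne : (1 + Real.sqrt (1 - Real.exp (-2 * S / D) ^ D)) ≠ 0 := by
    rw [← hgdef, ← hudef]; exact ne_of_gt h1u
  have hr' : HasDerivAt (fun x : ℝ =>
      (1 - Real.sqrt (1 - Real.exp (-2 * x / D) ^ D)) /
        (1 + Real.sqrt (1 - Real.exp (-2 * x / D) ^ D)))
      (-2 * (g ^ D / u) / (1 + u) ^ 2) S := by
    have h := hn.div hd hdne
    rw [← hgdef, ← hudef] at h
    refine h.congr_deriv (Eq.symm ?_)
    ring
  have hcr : HasDerivAt (fun x : ℝ =>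
      ((D : ℝ) ^ 2 / (((D : ℝ) - 1) * ((D : ℝ) + 2))) *
        ((1 - Real.sqrt (1 - Real.exp (-2 * x / D) ^ D)) /
          (1 + Real.sqrt (1 - Real.exp (-2 * x / D) ^ D))))
      (c * (-2 * (g ^ D / u) / (1 + u) ^ 2)) S := by
    have h := hr'.const_mul ((D : ℝ) ^ 2 / (((D : ℝ) - 1) * ((D : ℝ) + 2)))
    rw [← hcdef] at h
    exact h
  have h1g : HasDerivAt (fun x : ℝ => 1 - Real.exp (-2 * x / D)) (-(-2 / D * g)) S :=
    hg'.const_sub 1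
  have hAder : HasDerivAt (fun x : ℝ =>
      ((D : ℝ) ^ 2 / (((D : ℝ) - 1) * ((D : ℝ) + 2))) *
        ((1 - Real.sqrt (1 - Real.exp (-2 * x / D) ^ D)) /
          (1 + Real.sqrt (1 - Real.exp (-2 * x / D) ^ D))) *
        (1 - Real.exp (-2 * x / D)))
      (c * (-2 * (g ^ D / u) / (1 + u) ^ 2) * (1 - g) +
        c * ((1 - u) / (1 + u)) * (2 / D * g)) S := by
    have h := hcr.mul h1g
    rw [← hgdef, ← hudef, ← hcdef] at h
    refine h.congr_deriv (Eq.symm ?_)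
    ring
  have hEder : HasDerivAt (fun x : ℝ => 1 -
      ((D : ℝ) ^ 2 / (((D : ℝ) - 1) * ((D : ℝ) + 2))) *
        ((1 - Real.sqrt (1 - Real.exp (-2 * x / D) ^ D)) /
          (1 + Real.sqrt (1 - Real.exp (-2 * x / D) ^ D))) *
        (1 - Real.exp (-2 * x / D)))
      (c * (2 * (g ^ D / u) / (1 + u) ^ 2) * (1 - g) -
        c * ((1 - u) / (1 + u)) * (2 / D * g)) S := by
    have h := hAder.const_sub 1
    refine h.congr_deriv (Eq.symm ?_)
    ring
  have hEfun : (1 -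
      ((D : ℝ) ^ 2 / (((D : ℝ) - 1) * ((D : ℝ) + 2))) *
        ((1 - Real.sqrt (1 - Real.exp (-2 * S / D) ^ D)) /
          (1 + Real.sqrt (1 - Real.exp (-2 * S / D) ^ D))) *
        (1 - Real.exp (-2 * S / D))) = E := by
    rw [hEdef, hAdef, ← hgdef, ← hudef, ← hcdef]
  set Ep : ℝ := c * (2 * (g ^ D / u) / (1 + u) ^ 2) * (1 - g) -
      c * ((1 - u) / (1 + u)) * (2 / D * g) with hEpdef
  have hlog : HasDerivAt (fun x : ℝ => Real.log (1 -
      ((D : ℝ) ^ 2 / (((D : ℝ) - 1) * ((D : ℝ) + 2))) *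
        ((1 - Real.sqrt (1 - Real.exp (-2 * x / D) ^ D)) /
          (1 + Real.sqrt (1 - Real.exp (-2 * x / D) ^ D))) *
        (1 - Real.exp (-2 * x / D))))
      (Ep / E) S := by
    exact hEder.log (by rw [hEfun]; exact ne_of_gt hE0)
  have hcoef : HasDerivAt (fun x : ℝ => (D : ℝ) / (4 * x)) (-(D : ℝ) / (4 * S ^ 2)) S := by
    have h := (hasDerivAt_const S (D : ℝ)).div ((hasDerivAt_id S).const_mul (4 : ℝ))
      (by positivity)
    refine h.congr_deriv (Eq.symm ?_)
    simp only [id]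
    field_simp
    ring
  have hgam : HasDerivAt (gam D)
      ((-(D : ℝ) / (4 * S ^ 2)) * Real.log E + ((D : ℝ) / (4 * S)) * (Ep / E)) S := by
    exact (hcoef.mul hlog).const_add 1
  refine ⟨_, hgam, ?_⟩
  -- positivity of the derivative
  set L : ℝ := 2 * S / D with hLdef
  have hL0 : 0 < L := by rw [hLdef]; positivity
  have hgL : g = Real.exp (-L) := by
    rw [hgdef, hLdef]; congr 1; ring
  have h1gL : 1 - g ≤ L := by
    have := Real.add_one_le_exp (-L)
    rw [← hgL] at this
    linarith
  have hLg : L * g ≤ 1 - g := by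
    have h := Real.add_one_le_exp L
    have := mul_le_mul_of_nonneg_right h hg0.le
    have h1 : Real.exp L * g = 1 := by
      rw [hgL, ← Real.exp_add]
      norm_num
    nlinarith [this, h1]
  have hlogE : Real.log E < -A := by
    have := Real.log_lt_sub_one_of_pos hE0 (ne_of_lt hE1)
    rw [hEdef] at this ⊢
    linarith
  -- key inequality : 0 ≤ S * Ep + A * E
  have hSL : S = (D : ℝ) * L / 2 := by rw [hLdef]; field_simp
  have hkey : S * Ep + A * E =
      c * (1 - u) / (u * (1 + u)) *
        ((D : ℝ) * L * (1 - g) - L * g * u + u * (1 - g) * E) := by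
    rw [hEpdef, hAdef]
    rw [hSL]
    have hgD : g ^ D = 1 - u ^ 2 := by rw [hu2]; ring
    rw [hgD]
    field_simp
    ring
  have hbracket : 0 ≤ (D : ℝ) * L * (1 - g) - L * g * u + u * (1 - g) * E := by
    have h1 : L * g * u ≤ (1 - g) * u := mul_le_mul_of_nonneg_right hLg hu0.le
    have h2 : u * (1 - g) * E = u * (1 - g) - u * (1 - g) * A := by
      rw [hEdef]; ring
    have h3 : u * (1 - g) * A ≤ 1 * (1 - g) * A := by
      apply mul_le_mul_of_nonneg_right _ hA0.le
      apply mul_le_mul_of_nonneg_right hu1.le (by linarith)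
    have h4 : A ≤ L := le_trans hA1g h1gL
    nlinarith [mul_le_mul_of_nonneg_left h4 (by linarith : (0:ℝ) ≤ 1 - g), hL0.le,
      mul_nonneg hL0.le (sub_nonneg.2 hg1.le)]
  have hkeypos : 0 ≤ S * Ep + A * E := by
    rw [hkey]
    apply mul_nonneg _ hbracket
    apply div_nonneg (mul_nonneg hc0.le (by linarith)) (by positivity)
  have hstep : -A ≤ S * Ep / E := by
    rw [le_div_iff₀ hE0]
    nlinarith [hkeypos]
  have hX : 0 < S * (Ep / E) - Real.log E := by
    have h : S * (Ep / E) = S * Ep / E := by ring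
    rw [h]
    linarith
  have hform : (-(D : ℝ) / (4 * S ^ 2)) * Real.log E + ((D : ℝ) / (4 * S)) * (Ep / E) =
      (D : ℝ) / (4 * S ^ 2) * (S * (Ep / E) - Real.log E) := by
    field_simp
    ring
  rw [hform]
  exact mul_pos (by positivity) hX

/-- For `D ≥ 2`, the convergence rate satisfies `γ(S) < 1` for all `S > 0`, and `γ` is
strictly increasing on `(0, ∞)`. -/
theorem gam_lt_one_and_strictMono (D : ℕ) (hD : 2 ≤ D) :
    (∀ S > 0, gam D S < 1) ∧ StrictMonoOn (gam D) (Set.Ioi 0) := by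
  constructor
  · intro S hS
    have hD2 : (2 : ℝ) ≤ (D : ℝ) := by exact_mod_cast hD
    have hD0 : (0 : ℝ) < (D : ℝ) := by linarith
    unfold gam
    set g : ℝ := Real.exp (-2 * S / D) with hgdef
    have hg0 : 0 < g := Real.exp_pos _
    have hg1 : g < 1 := by
      rw [hgdef]
      apply Real.exp_lt_one_iff.mpr
      have h : -2 * S / (D:ℝ) = -(2 * S / D) := by ring
      rw [h]
      have : 0 < 2 * S / (D:ℝ) := by positivity
      linarith
    have hp0 : 0 < g ^ D := pow_pos hg0 D
    have hp1 : g ^ D < 1 := pow_lt_one₀ hg0.le hg1 (by omega)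
    have hw0 : 0 < 1 - g ^ D := by linarith
    set u : ℝ := Real.sqrt (1 - g ^ D) with hudef
    have hu0 : 0 < u := Real.sqrt_pos.2 hw0
    have hu2 : u ^ 2 = 1 - g ^ D := Real.sq_sqrt hw0.le
    have hu1 : u < 1 := by nlinarith [hu2, hu0]
    have h1u : (0:ℝ) < 1 + u := by linarith
    set c : ℝ := (D : ℝ) ^ 2 / (((D : ℝ) - 1) * ((D : ℝ) + 2)) with hcdef
    have hden : (0:ℝ) < ((D : ℝ) - 1) * ((D : ℝ) + 2) := by nlinarith
    have hc0 : 0 < c := by rw [hcdef]; exact div_pos (by positivity) hden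
    have hc1 : c ≤ 1 := by
      rw [hcdef, div_le_one hden]
      nlinarith
    have hr0 : 0 < (1 - u) / (1 + u) := div_pos (by linarith) h1u
    have hr1 : (1 - u) / (1 + u) ≤ 1 := by
      rw [div_le_one h1u]; linarith
    have hA0 : 0 < c * ((1 - u) / (1 + u)) * (1 - g) :=
      mul_pos (mul_pos hc0 hr0) (by linarith)
    have hA1 : c * ((1 - u) / (1 + u)) * (1 - g) < 1 := by
      calc c * ((1 - u) / (1 + u)) * (1 - g) ≤ 1 * 1 * (1 - g) := by
            apply mul_le_mul _ le_rfl (by linarith) (by norm_num)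
            exact mul_le_mul hc1 hr1 hr0.le (by norm_num)
        _ = 1 - g := by ring
        _ < 1 := by linarith
    have hlogneg : Real.log (1 - c * ((1 - u) / (1 + u)) * (1 - g)) < 0 :=
      Real.log_neg (by linarith) (by linarith)
    have hcoef : 0 < (D : ℝ) / (4 * S) := by positivity
    nlinarith [mul_pos hcoef (neg_pos.2 hlogneg)]
  · apply strictMonoOn_of_deriv_pos (convex_Ioi 0)
    · intro x hx
      obtain ⟨d, hd, _⟩ := gam_deriv_pos D hD (Set.mem_Ioi.mp hx)
      exact hd.differentiableAt.continuousAt.continuousWithinAt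
    · intro x hx
      rw [interior_Ioi] at hx
      obtain ⟨d, hd, hdpos⟩ := gam_deriv_pos D hD (Set.mem_Ioi.mp hx)
      rw [hd.deriv]
      exact hdpos
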